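/- Let f, g, h be locally integrable complex-valued functions on ℝ, and let a, b, c, d be the entries of M = ψ(f,g,h) (the solution matrix with M′ = mM, M(0) = I, m = ((g/2, h),(−f, −g/2)), det M ≡ 1). Fix y_0 ∈ ℂ such that c(x) y_0 + d(x) ≠ 0 for every x ∈ ℝ. Then y(x) = (a(x) y_0 + b(x)) / (c(x) y_0 + d(x)) is locally absolutely continuous, satisfies y(0) = y_0, and satisfies the Riccati equation y′ = f y² + g y + h almost everywhere on ℝ. -/

import Mathlib

open MeasureTheory intervalIntegral Filter

noncomputable section

/-- Alternating product f(s1)g(s2)f(s3)⋯ with j factors (index 0 ↦ f). -/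
def altProd (f g : ℝ → ℂ) (j : ℕ) (s : Fin j → ℝ) : ℂ :=
  ∏ i : Fin j, if (i : ℕ) % 2 = 0 then f (s i) else g (s i)

/-- The signed simplex integral A_j(f,g,x). -/
def simplexA (f g : ℝ → ℂ) (j : ℕ) (x : ℝ) : ℂ :=
  if 0 ≤ x then
    ∫ s in {s : Fin j → ℝ | StrictMono s ∧ ∀ i, s i ∈ Set.Ioo 0 x}, altProd f g j s
  else
    (-1 : ℂ) ^ j *
      ∫ s in {s : Fin j → ℝ | StrictAnti s ∧ ∀ i, s i ∈ Set.Ioo x 0}, altProd f g j s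

/-- The bivariate exponential E_{f,g}. -/
def bivE (f g : ℝ → ℂ) (x : ℝ) : ℂ := 1 + ∑' j : ℕ, simplexA f g (j + 1) x

def bivC (f g : ℝ → ℂ) (x : ℝ) : ℂ := (bivE f g x + bivE (-f) (-g) x) / 2

def bivS (f g : ℝ → ℂ) (x : ℝ) : ℂ := (bivE f g x - bivE (-f) (-g) x) / 2

/-- Locally absolutely continuous complex-valued function on ℝ. -/
def LocAC (F : ℝ → ℂ) : Prop :=
  ∃ F' : ℝ → ℂ, LocallyIntegrable F' volume ∧
    ∀ x : ℝ, F x = F 0 + ∫ t in (0:ℝ)..x, F' t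

end

section RiccatiAux

open Set MeasureTheory intervalIntegral

variable {𝕜 : Type*} [RCLike 𝕜]

lemma locInt_ii {v : ℝ → 𝕜} (hv : LocallyIntegrable v volume) (p q : ℝ) :
    IntervalIntegrable v volume p q :=
  intervalIntegrable_iff.2 ((hv.integrableOn_isCompact isCompact_uIcc).mono_set
    Set.Ioc_subset_Icc_self)

lemma cont_primitive {v : ℝ → 𝕜} (hv : LocallyIntegrable v volume) (p : ℝ) :
    Continuous fun x => ∫ t in p..x, v t :=
  intervalIntegral.continuous_primitive (fun a b => locInt_ii hv a b) p

lemma locInt_mul_cont {u V : ℝ → 𝕜} (hu : LocallyIntegrable u volume) (hV : Continuous V) :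
    LocallyIntegrable (fun t => u t * V t) volume := by
  rw [MeasureTheory.locallyIntegrable_iff]
  exact fun K hK => (hu.integrableOn_isCompact hK).mul_continuousOn hV.continuousOn hK

lemma cont_mul_locInt {u V : ℝ → 𝕜} (hu : LocallyIntegrable u volume) (hV : Continuous V) :
    LocallyIntegrable (fun t => V t * u t) volume := by
  rw [MeasureTheory.locallyIntegrable_iff]
  exact fun K hK => (hu.integrableOn_isCompact hK).continuousOn_mul hV.continuousOn hK

lemma locInt_congr {u v : ℝ → 𝕜} (hu : LocallyIntegrable u volume) (huv : ∀ x, u x = v x) :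
    LocallyIntegrable v volume := (funext huv : u = v) ▸ hu

lemma fubini_core {u v : ℝ → 𝕜} (hu : LocallyIntegrable u volume)
    (hv : LocallyIntegrable v volume) {p q : ℝ} (hpq : p ≤ q) :
    (∫ t in Ioc p q, u t) * (∫ t in Ioc p q, v t)
      = (∫ t in Ioc p q, u t * ∫ s in Ioc p t, v s)
        + ∫ t in Ioc p q, (∫ s in Ioc p t, u s) * v t := by
  set μ := volume.restrict (Ioc p q) with hμ
  have hui : Integrable u μ :=
    (hu.integrableOn_isCompact isCompact_Icc).mono_set Ioc_subset_Icc_self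
  have hvi : Integrable v μ :=
    (hv.integrableOn_isCompact isCompact_Icc).mono_set Ioc_subset_Icc_self
  have hprod : Integrable (fun z : ℝ × ℝ => u z.1 * v z.2) (μ.prod μ) := hui.mul_prod hvi
  have hT : MeasurableSet {z : ℝ × ℝ | z.2 ≤ z.1} :=
    measurableSet_le measurable_snd measurable_fst
  have hF : Integrable ({z : ℝ × ℝ | z.2 ≤ z.1}.indicator fun z => u z.1 * v z.2) (μ.prod μ) :=
    hprod.indicator hT
  have hG : Integrable ({z : ℝ × ℝ | z.2 ≤ z.1}ᶜ.indicator fun z => u z.1 * v z.2) (μ.prod μ) :=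
    hprod.indicator hT.compl
  have hsplit : (∫ t in Ioc p q, u t) * ∫ t in Ioc p q, v t
      = (∫ z, ({z : ℝ × ℝ | z.2 ≤ z.1}.indicator fun z => u z.1 * v z.2) z ∂μ.prod μ)
        + ∫ z, ({z : ℝ × ℝ | z.2 ≤ z.1}ᶜ.indicator fun z => u z.1 * v z.2) z ∂μ.prod μ := by
    rw [← integral_add hF hG]
    have hpt : ∀ z : ℝ × ℝ,
        ({z : ℝ × ℝ | z.2 ≤ z.1}.indicator fun z => u z.1 * v z.2) z
          + ({z : ℝ × ℝ | z.2 ≤ z.1}ᶜ.indicator fun z => u z.1 * v z.2) z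
          = u z.1 * v z.2 := by
      intro z
      by_cases hz : z ∈ {z : ℝ × ℝ | z.2 ≤ z.1} <;>
        simp [Set.indicator_apply, hz]
    simp_rw [hpt]
    exact (integral_prod_mul u v).symm
  have hFeq : (∫ z, ({z : ℝ × ℝ | z.2 ≤ z.1}.indicator fun z => u z.1 * v z.2) z ∂μ.prod μ)
      = ∫ t in Ioc p q, u t * ∫ s in Ioc p t, v s := by
    rw [integral_prod _ hF]
    apply MeasureTheory.integral_congr_ae
    filter_upwards [ae_restrict_mem measurableSet_Ioc] with x hx
    have hpt : ∀ y : ℝ,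
        ({z : ℝ × ℝ | z.2 ≤ z.1}.indicator fun z => u z.1 * v z.2) (x, y)
          = (Iic x).indicator (fun y => u x * v y) y := by
      intro y; simp [Set.indicator_apply]
    simp_rw [hpt]
    rw [MeasureTheory.integral_indicator measurableSet_Iic, hμ,
      Measure.restrict_restrict measurableSet_Iic]
    have hset : Iic x ∩ Ioc p q = Ioc p x := by
      ext y
      simp only [mem_inter_iff, mem_Iic, mem_Ioc]
      exact ⟨fun ⟨h1, h2, h3⟩ => ⟨h2, h1⟩, fun ⟨h1, h2⟩ => ⟨h2, h1, h2.trans hx.2⟩⟩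
    rw [hset, MeasureTheory.integral_const_mul]
  have hGeq : (∫ z, ({z : ℝ × ℝ | z.2 ≤ z.1}ᶜ.indicator fun z => u z.1 * v z.2) z ∂μ.prod μ)
      = ∫ t in Ioc p q, (∫ s in Ioc p t, u s) * v t := by
    rw [integral_prod_symm _ hG]
    apply MeasureTheory.integral_congr_ae
    filter_upwards [ae_restrict_mem measurableSet_Ioc] with y hy
    have hpt : ∀ x : ℝ,
        ({z : ℝ × ℝ | z.2 ≤ z.1}ᶜ.indicator fun z => u z.1 * v z.2) (x, y)
          = (Iio y).indicator (fun x => u x * v y) x := by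
      intro x; simp [Set.indicator_apply, not_le]
    simp_rw [hpt]
    rw [MeasureTheory.integral_indicator measurableSet_Iio, hμ,
      Measure.restrict_restrict measurableSet_Iio]
    have hset : Iio y ∩ Ioc p q = Ioo p y := by
      ext z
      simp only [mem_inter_iff, mem_Iio, mem_Ioc, mem_Ioo]
      exact ⟨fun ⟨h1, h2, h3⟩ => ⟨h2, h1⟩, fun ⟨h1, h2⟩ => ⟨h2, h1, h2.le.trans hy.2⟩⟩
    rw [hset, ← integral_Ioc_eq_integral_Ioo, MeasureTheory.integral_mul_const]
  rw [hsplit, hFeq, hGeq]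

lemma fubini_interval_le {u v : ℝ → 𝕜} (hu : LocallyIntegrable u volume)
    (hv : LocallyIntegrable v volume) {p q : ℝ} (hpq : p ≤ q) :
    (∫ t in p..q, u t) * (∫ t in p..q, v t)
      = (∫ t in p..q, u t * ∫ s in p..t, v s) + ∫ t in p..q, (∫ s in p..t, u s) * v t := by
  rw [integral_of_le hpq, integral_of_le hpq, integral_of_le hpq, integral_of_le hpq]
  have h1 : ∫ t in Ioc p q, u t * ∫ s in p..t, v s
      = ∫ t in Ioc p q, u t * ∫ s in Ioc p t, v s := by
    apply setIntegral_congr_fun measurableSet_Ioc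
    intro t ht
    simp only [integral_of_le ht.1.le]
  have h2 : ∫ t in Ioc p q, (∫ s in p..t, u s) * v t
      = ∫ t in Ioc p q, (∫ s in Ioc p t, u s) * v t := by
    apply setIntegral_congr_fun measurableSet_Ioc
    intro t ht
    simp only [integral_of_le ht.1.le]
  rw [h1, h2]
  exact fubini_core hu hv hpq

lemma fubini_interval {u v : ℝ → 𝕜} (hu : LocallyIntegrable u volume)
    (hv : LocallyIntegrable v volume) (x : ℝ) :
    (∫ t in (0:ℝ)..x, u t) * (∫ t in (0:ℝ)..x, v t)
      = ∫ t in (0:ℝ)..x, (u t * (∫ s in (0:ℝ)..t, v s) + (∫ s in (0:ℝ)..t, u s) * v t) := by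
  have hU : Continuous fun t => ∫ s in (0:ℝ)..t, u s := cont_primitive hu 0
  have hV : Continuous fun t => ∫ s in (0:ℝ)..t, v s := cont_primitive hv 0
  have iiuV : ∀ a b : ℝ, IntervalIntegrable (fun t => u t * ∫ s in (0:ℝ)..t, v s) volume a b :=
    locInt_ii (locInt_mul_cont hu hV)
  have iiUv : ∀ a b : ℝ, IntervalIntegrable (fun t => (∫ s in (0:ℝ)..t, u s) * v t) volume a b :=
    locInt_ii (cont_mul_locInt hv hU)
  refine Eq.trans ?_ (intervalIntegral.integral_add (iiuV 0 x) (iiUv 0 x)).symm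
  rcases le_or_gt 0 x with hx | hx
  · exact fubini_interval_le hu hv hx
  · have hx0 : x ≤ 0 := hx.le
    have iu : ∀ a b : ℝ, IntervalIntegrable u volume a b := locInt_ii hu
    have iv : ∀ a b : ℝ, IntervalIntegrable v volume a b := locInt_ii hv
    have core := fubini_interval_le hu hv hx0
    have h1 : (∫ t in x..(0:ℝ), u t * ∫ s in x..t, v s)
        = (∫ t in x..(0:ℝ), u t) * (∫ s in x..(0:ℝ), v s)
          + ∫ t in x..(0:ℝ), u t * ∫ s in (0:ℝ)..t, v s :=
      calc (∫ t in x..(0:ℝ), u t * ∫ s in x..t, v s)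
          = ∫ t in x..(0:ℝ), (u t * (∫ s in x..(0:ℝ), v s) + u t * ∫ s in (0:ℝ)..t, v s) := by
            apply intervalIntegral.integral_congr
            intro t _
            simp only
            rw [← intervalIntegral.integral_add_adjacent_intervals (iv x 0) (iv 0 t)]
            ring
        _ = (∫ t in x..(0:ℝ), u t * (∫ s in x..(0:ℝ), v s))
              + ∫ t in x..(0:ℝ), u t * ∫ s in (0:ℝ)..t, v s :=
            intervalIntegral.integral_add ((iu x 0).mul_const _) (iiuV x 0)
        _ = (∫ t in x..(0:ℝ), u t) * (∫ s in x..(0:ℝ), v s)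
              + ∫ t in x..(0:ℝ), u t * ∫ s in (0:ℝ)..t, v s := by
            rw [intervalIntegral.integral_mul_const]
    have h2 : (∫ t in x..(0:ℝ), (∫ s in x..t, u s) * v t)
        = (∫ t in x..(0:ℝ), u t) * (∫ s in x..(0:ℝ), v s)
          + ∫ t in x..(0:ℝ), (∫ s in (0:ℝ)..t, u s) * v t :=
      calc (∫ t in x..(0:ℝ), (∫ s in x..t, u s) * v t)
          = ∫ t in x..(0:ℝ), ((∫ s in x..(0:ℝ), u s) * v t + (∫ s in (0:ℝ)..t, u s) * v t) := by
            apply intervalIntegral.integral_congr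
            intro t _
            simp only
            rw [← intervalIntegral.integral_add_adjacent_intervals (iu x 0) (iu 0 t)]
            ring
        _ = (∫ t in x..(0:ℝ), (∫ s in x..(0:ℝ), u s) * v t)
              + ∫ t in x..(0:ℝ), (∫ s in (0:ℝ)..t, u s) * v t :=
            intervalIntegral.integral_add ((iv x 0).const_mul _) (iiUv x 0)
        _ = (∫ t in x..(0:ℝ), u t) * (∫ s in x..(0:ℝ), v s)
              + ∫ t in x..(0:ℝ), (∫ s in (0:ℝ)..t, u s) * v t := by
            rw [intervalIntegral.integral_const_mul]
    rw [h1, h2] at core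
    simp only [intervalIntegral.integral_symm x 0]
    linear_combination -core

lemma prodRule {F G F' G' : ℝ → 𝕜} (hF' : LocallyIntegrable F' volume)
    (hG' : LocallyIntegrable G' volume)
    (hF : ∀ x, F x = F 0 + ∫ t in (0:ℝ)..x, F' t)
    (hG : ∀ x, G x = G 0 + ∫ t in (0:ℝ)..x, G' t) (x : ℝ) :
    F x * G x = F 0 * G 0 + ∫ t in (0:ℝ)..x, (F' t * G t + F t * G' t) := by
  have hU : Continuous fun t => ∫ s in (0:ℝ)..t, F' s := cont_primitive hF' 0
  have hV : Continuous fun t => ∫ s in (0:ℝ)..t, G' s := cont_primitive hG' 0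
  have ii1 : IntervalIntegrable (fun t => F' t * G 0 + F 0 * G' t) volume 0 x :=
    ((locInt_ii hF' 0 x).mul_const _).add ((locInt_ii hG' 0 x).const_mul _)
  have ii2 : IntervalIntegrable
      (fun t => F' t * (∫ s in (0:ℝ)..t, G' s) + (∫ s in (0:ℝ)..t, F' s) * G' t) volume 0 x :=
    (locInt_ii ((locInt_mul_cont hF' hV).add (cont_mul_locInt hG' hU)) 0 x)
  have step : (∫ t in (0:ℝ)..x, (F' t * G t + F t * G' t))
      = ∫ t in (0:ℝ)..x, ((F' t * G 0 + F 0 * G' t)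
          + (F' t * (∫ s in (0:ℝ)..t, G' s) + (∫ s in (0:ℝ)..t, F' s) * G' t)) := by
    apply intervalIntegral.integral_congr
    intro t _
    simp only
    rw [hF t, hG t]
    ring
  rw [step]
  rw [intervalIntegral.integral_add ii1 ii2]
  rw [intervalIntegral.integral_add ((locInt_ii hF' 0 x).mul_const _)
      ((locInt_ii hG' 0 x).const_mul _),
    intervalIntegral.integral_mul_const, intervalIntegral.integral_const_mul,
    ← fubini_interval hF' hG' x]
  rw [hF x, hG x]
  ring

lemma powRule {k : ℝ → ℝ} (hk : LocallyIntegrable k volume) (n : ℕ) (x : ℝ) :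
    (∫ t in (0:ℝ)..x, k t) ^ (n + 1)
      = ∫ t in (0:ℝ)..x, ((n + 1 : ℝ) * (k t * (∫ s in (0:ℝ)..t, k s) ^ n)) := by
  induction n generalizing x with
  | zero => simp
  | succ n ih =>
    have hrc : Continuous fun t => ∫ s in (0:ℝ)..t, k s := cont_primitive hk 0
    have hF' : LocallyIntegrable
        (fun t => (n + 1 : ℝ) * (k t * (∫ s in (0:ℝ)..t, k s) ^ n)) volume := by
      apply locInt_congr (locInt_mul_cont hk (continuous_const.mul (hrc.pow n) : Continuous fun t => ((n:ℝ)+1) * (∫ s in (0:ℝ)..t, k s) ^ n))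
      intro t
      simp only [Pi.mul_apply]
      ring
    have hFeq : ∀ y : ℝ, (∫ t in (0:ℝ)..y, k t) ^ (n + 1)
        = (∫ t in (0:ℝ)..(0:ℝ), k t) ^ (n + 1)
          + ∫ t in (0:ℝ)..y, ((n + 1 : ℝ) * (k t * (∫ s in (0:ℝ)..t, k s) ^ n)) := by
      intro y
      rw [ih y]
      simp
    have hGeq : ∀ y : ℝ, (∫ t in (0:ℝ)..y, k t)
        = (∫ t in (0:ℝ)..(0:ℝ), k t) + ∫ t in (0:ℝ)..y, k t := by
      intro y; simp
    have key := prodRule (F := fun y => (∫ t in (0:ℝ)..y, k t) ^ (n + 1))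
      (G := fun y => ∫ t in (0:ℝ)..y, k t) hF' hk hFeq hGeq x
    simp only at key
    rw [pow_succ]
    rw [key]
    have : (∫ t in (0:ℝ)..x,
          ((n + 1 : ℝ) * (k t * (∫ s in (0:ℝ)..t, k s) ^ n) * (∫ s in (0:ℝ)..t, k s)
            + (∫ s in (0:ℝ)..t, k s) ^ (n + 1) * k t))
        = ∫ t in (0:ℝ)..x, ((n + 1 + 1 : ℝ) * (k t * (∫ s in (0:ℝ)..t, k s) ^ (n + 1))) := by
      apply intervalIntegral.integral_congr
      intro t _
      simp only
      ring
    rw [this]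
    push_cast
    simp

lemma locInt_norm {v : ℝ → 𝕜} (hv : LocallyIntegrable v volume) :
    LocallyIntegrable (fun t => ‖v t‖) volume := by
  rw [MeasureTheory.locallyIntegrable_iff]
  exact fun K hK => (hv.integrableOn_isCompact hK).norm

lemma locInt_comp_neg {v : ℝ → 𝕜} (hv : LocallyIntegrable v volume) :
    LocallyIntegrable (fun t => v (-t)) volume := by
  rw [MeasureTheory.locallyIntegrable_iff]
  intro K hK
  obtain ⟨R, hR⟩ := hK.isBounded.subset_closedBall 0
  have hRR : K ⊆ Icc (-(max R 0)) (max R 0) := by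
    intro w hw
    have := hR hw
    rw [Real.closedBall_eq_Icc] at this
    obtain ⟨h1, h2⟩ := this
    have hRm : R ≤ max R 0 := le_max_left R 0
    constructor <;> [linarith; linarith]
  have hii : IntervalIntegrable (fun t => v (-t)) volume (-(max R 0)) (max R 0) := by
    have := (IntervalIntegrable.iff_comp_neg
      (f := v) (a := max R 0) (b := -(max R 0))).1 (locInt_ii hv _ _)
    simpa using this
  have hle : -(max R 0) ≤ max R 0 :=
    le_trans (neg_nonpos.2 (le_max_right R 0)) (le_max_right R 0)
  exact ((intervalIntegrable_iff_integrableOn_Icc_of_le hle).1 hii).mono_set hRR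

lemma uniq_nonneg {K W : ℝ → ℂ} (hK : LocallyIntegrable K volume) (hW : Continuous W)
    (heq : ∀ x, W x = ∫ t in (0:ℝ)..x, K t * W t) {x : ℝ} (hx : 0 ≤ x) : W x = 0 := by
  have hk : LocallyIntegrable (fun t => ‖K t‖) volume := locInt_norm hK
  have hrc : Continuous fun t => ∫ s in (0:ℝ)..t, ‖K s‖ := cont_primitive hk 0
  obtain ⟨z, hz, hzmax'⟩ := isCompact_Icc.exists_isMaxOn (nonempty_Icc.2 hx)
    (continuous_norm.comp hW).continuousOn
  have hzmax : ∀ t ∈ Icc (0:ℝ) x, ‖W t‖ ≤ ‖W z‖ := fun t ht => hzmax' ht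
  have hC0 : 0 ≤ ‖W z‖ := norm_nonneg _
  have hrnn : ∀ t : ℝ, 0 ≤ t → 0 ≤ ∫ s in (0:ℝ)..t, ‖K s‖ := fun t ht =>
    intervalIntegral.integral_nonneg ht fun s _ => norm_nonneg _
  have main : ∀ n : ℕ, ∀ t ∈ Icc 0 x,
      ‖W t‖ ≤ ‖W z‖ * (∫ s in (0:ℝ)..t, ‖K s‖) ^ n / n.factorial := by
    intro n
    induction n with
    | zero => intro t ht; simpa using hzmax t ht
    | succ n ih =>
      intro t ht
      have hbi : IntervalIntegrable
          (fun s => ‖K s‖ * (‖W z‖ * (∫ s' in (0:ℝ)..s, ‖K s'‖) ^ n / n.factorial))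
          volume 0 t :=
        locInt_ii (locInt_mul_cont hk
          (((continuous_const.mul (hrc.pow n)).div_const _ : Continuous fun s =>
            ‖W z‖ * (∫ s' in (0:ℝ)..s, ‖K s'‖) ^ n / n.factorial))) 0 t
      have hb : ∀ᵐ s ∂(volume.restrict (Set.uIoc 0 t)),
          ‖K s * W s‖ ≤ ‖K s‖ * (‖W z‖ * (∫ s' in (0:ℝ)..s, ‖K s'‖) ^ n / n.factorial) := by
        rw [uIoc_of_le ht.1]
        filter_upwards [ae_restrict_mem measurableSet_Ioc] with s hs
        rw [norm_mul]
        exact mul_le_mul_of_nonneg_left (ih s ⟨hs.1.le, hs.2.trans ht.2⟩) (norm_nonneg _)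
      have hfac : (n.factorial : ℝ) ≠ 0 := Nat.cast_ne_zero.2 n.factorial_ne_zero
      have hcongr : (∫ s in (0:ℝ)..t,
            ‖K s‖ * (‖W z‖ * (∫ s' in (0:ℝ)..s, ‖K s'‖) ^ n / n.factorial))
          = ∫ s in (0:ℝ)..t, ((‖W z‖ / (n.factorial * ((n:ℝ)+1)))
              * (((n:ℝ)+1) * (‖K s‖ * (∫ s' in (0:ℝ)..s, ‖K s'‖) ^ n))) := by
        apply intervalIntegral.integral_congr
        intro s _
        simp only
        field_simp
      have hint : (∫ s in (0:ℝ)..t,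
            ‖K s‖ * (‖W z‖ * (∫ s' in (0:ℝ)..s, ‖K s'‖) ^ n / n.factorial))
          = ‖W z‖ * (∫ s in (0:ℝ)..t, ‖K s‖) ^ (n+1) / (n+1).factorial := by
        have hp : (∫ s in (0:ℝ)..t, (((n:ℝ)+1) * (‖K s‖ * (∫ s' in (0:ℝ)..s, ‖K s'‖) ^ n)))
            = (∫ s in (0:ℝ)..t, ‖K s‖) ^ (n+1) := by
          rw [powRule hk n t]
        rw [hcongr, intervalIntegral.integral_const_mul, hp, Nat.factorial_succ]
        push_cast
        ring
      calc ‖W t‖ = ‖∫ s in (0:ℝ)..t, K s * W s‖ := by rw [← heq t]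
        _ ≤ |∫ s in (0:ℝ)..t, ‖K s‖ * (‖W z‖ * (∫ s' in (0:ℝ)..s, ‖K s'‖) ^ n / n.factorial)| :=
          intervalIntegral.norm_integral_le_abs_of_norm_le hb hbi
        _ = ‖W z‖ * (∫ s in (0:ℝ)..t, ‖K s‖) ^ (n+1) / (n+1).factorial := by
          rw [hint, abs_of_nonneg]
          exact div_nonneg (mul_nonneg hC0 (pow_nonneg (hrnn t ht.1) _)) (Nat.cast_nonneg _)
  have hlim : Tendsto (fun n : ℕ =>
      ‖W z‖ * (∫ s in (0:ℝ)..x, ‖K s‖) ^ n / n.factorial) atTop (nhds 0) := by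
    have h := FloorSemiring.tendsto_pow_div_factorial_atTop (K := ℝ) (∫ s in (0:ℝ)..x, ‖K s‖)
    have h2 := h.const_mul ‖W z‖
    simpa [mul_div_assoc] using h2
  have hle : ‖W x‖ ≤ 0 :=
    ge_of_tendsto hlim (Filter.Eventually.of_forall fun n => main n x ⟨hx, le_refl x⟩)
  simpa using norm_le_zero_iff.1 hle

lemma uniq {K W : ℝ → ℂ} (hK : LocallyIntegrable K volume) (hW : Continuous W)
    (heq : ∀ x, W x = ∫ t in (0:ℝ)..x, K t * W t) : ∀ x, W x = 0 := by
  intro x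
  rcases le_or_gt 0 x with hx | hx
  · exact uniq_nonneg hK hW heq hx
  · have hK2 : LocallyIntegrable (fun t => -K (-t)) volume := (locInt_comp_neg hK).neg
    have hW2 : Continuous fun t => W (-t) := hW.comp continuous_neg
    have heq2 : ∀ t : ℝ, W (-t) = ∫ s in (0:ℝ)..t, (-K (-s)) * W (-s) := by
      intro t
      have h1 : (∫ s in (0:ℝ)..t, K (-s) * W (-s)) = ∫ s in -t..(0:ℝ), K s * W s := by
        simpa using intervalIntegral.integral_comp_neg (f := fun s => K s * W s) (a := 0) (b := t)
      calc W (-t) = ∫ s in (0:ℝ)..(-t), K s * W s := heq (-t)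
        _ = -∫ s in -t..(0:ℝ), K s * W s := intervalIntegral.integral_symm (-t) 0
        _ = -∫ s in (0:ℝ)..t, K (-s) * W (-s) := by rw [h1]
        _ = ∫ s in (0:ℝ)..t, (-K (-s)) * W (-s) := by
          rw [← intervalIntegral.integral_neg]
          apply intervalIntegral.integral_congr
          intro s _
          simp only
          ring
    have := uniq_nonneg hK2 hW2 heq2 (le_of_lt (neg_pos.2 hx))
    simpa using this

lemma cont_of_ftc {F F' : ℝ → 𝕜} (hF' : LocallyIntegrable F' volume)
    (hFeq : ∀ x, F x = F 0 + ∫ t in (0:ℝ)..x, F' t) : Continuous F :=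
  (continuous_const.add (cont_primitive hF' 0)).congr fun x => (hFeq x).symm

lemma invRule {D D' : ℝ → ℂ} (hD' : LocallyIntegrable D' volume)
    (hDeq : ∀ x, D x = D 0 + ∫ t in (0:ℝ)..x, D' t) (hDne : ∀ x, D x ≠ 0) :
    (∀ x, (D x)⁻¹ = (D 0)⁻¹ + ∫ t in (0:ℝ)..x, -D' t * ((D t)⁻¹) ^ 2) ∧
      LocallyIntegrable (fun t => -D' t * ((D t)⁻¹) ^ 2) volume := by
  have hDc : Continuous D := cont_of_ftc hD' hDeq
  have hEc : Continuous fun x => (D x)⁻¹ := hDc.inv₀ hDne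
  have hG' : LocallyIntegrable (fun t => -D' t * ((D t)⁻¹) ^ 2) volume :=
    locInt_mul_cont hD'.neg (hEc.pow 2)
  set G : ℝ → ℂ := fun x => (D 0)⁻¹ + ∫ t in (0:ℝ)..x, -D' t * ((D t)⁻¹) ^ 2 with hGdef
  have hGc : Continuous G := continuous_const.add (cont_primitive hG' 0)
  have hGeq : ∀ x, G x = G 0 + ∫ t in (0:ℝ)..x, -D' t * ((D t)⁻¹) ^ 2 := by
    intro x; simp [hGdef]
  have hW0 : G 0 * D 0 = 1 := by
    simp only [hGdef]
    simp [inv_mul_cancel₀ (hDne 0)]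
  have hWeq : ∀ x, G x * D x - 1 = ∫ t in (0:ℝ)..x, (D' t * (D t)⁻¹) * (G t * D t - 1) := by
    intro x
    rw [prodRule hG' hD' hGeq hDeq x, hW0]
    have hpt : ∀ t : ℝ, -D' t * ((D t)⁻¹) ^ 2 * D t + G t * D' t
        = D' t * (D t)⁻¹ * (G t * D t - 1) := by
      intro t
      have := hDne t
      field_simp
      ring
    rw [intervalIntegral.integral_congr (g := fun t => D' t * (D t)⁻¹ * (G t * D t - 1))
      (fun t _ => hpt t)]
    ring
  have hWzero := uniq (K := fun t => D' t * (D t)⁻¹) (W := fun x => G x * D x - 1)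
    (locInt_mul_cont hD' hEc) ((hGc.mul hDc).sub continuous_const) hWeq
  have hGinv : ∀ x, (D x)⁻¹ = G x := by
    intro x
    have h1 : G x * D x = 1 := by have := hWzero x; linear_combination this
    exact (eq_inv_of_mul_eq_one_left h1).symm
  exact ⟨fun x => hGinv x, hG'⟩

end RiccatiAux

theorem riccati_standard_solution (f g h : ℝ → ℂ)
    (hf : LocallyIntegrable f volume) (hg : LocallyIntegrable g volume)
    (hh : LocallyIntegrable h volume)
    (a b c d : ℝ → ℂ)
    (ha : LocAC a) (hb : LocAC b) (hc : LocAC c) (hd : LocAC d)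
    (hM : ∀ᵐ x : ℝ,
      HasDerivAt a (g x / 2 * a x + h x * c x) x ∧
      HasDerivAt b (g x / 2 * b x + h x * d x) x ∧
      HasDerivAt c (-f x * a x - g x / 2 * c x) x ∧
      HasDerivAt d (-f x * b x - g x / 2 * d x) x)
    (ha0 : a 0 = 1) (hb0 : b 0 = 0) (hc0 : c 0 = 0) (hd0 : d 0 = 1)
    (hdet : ∀ x : ℝ, a x * d x - b x * c x = 1)
    (y₀ : ℂ) (hden : ∀ x : ℝ, c x * y₀ + d x ≠ 0)
    (y : ℝ → ℂ) (hy : y = fun x => (a x * y₀ + b x) / (c x * y₀ + d x)) :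
    LocAC y ∧ y 0 = y₀ ∧
    (∀ᵐ x : ℝ, HasDerivAt y (f x * y x ^ 2 + g x * y x + h x) x) := by
  subst hy
  obtain ⟨a', ha'li, ha'eq⟩ := ha
  obtain ⟨b', hb'li, hb'eq⟩ := hb
  obtain ⟨c', hc'li, hc'eq⟩ := hc
  obtain ⟨d', hd'li, hd'eq⟩ := hd
  have hN'li : LocallyIntegrable (fun t => a' t * y₀ + b' t) volume :=
    (locInt_mul_cont ha'li continuous_const).add hb'li
  have hD'li : LocallyIntegrable (fun t => c' t * y₀ + d' t) volume :=
    (locInt_mul_cont hc'li continuous_const).add hd'li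
  have hNeq : ∀ x, a x * y₀ + b x = (a 0 * y₀ + b 0) + ∫ t in (0:ℝ)..x, (a' t * y₀ + b' t) := by
    intro x
    rw [intervalIntegral.integral_add ((locInt_ii ha'li 0 x).mul_const _) (locInt_ii hb'li 0 x),
      intervalIntegral.integral_mul_const, ha'eq x, hb'eq x]
    ring
  have hDeq : ∀ x, c x * y₀ + d x = (c 0 * y₀ + d 0) + ∫ t in (0:ℝ)..x, (c' t * y₀ + d' t) := by
    intro x
    rw [intervalIntegral.integral_add ((locInt_ii hc'li 0 x).mul_const _) (locInt_ii hd'li 0 x),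
      intervalIntegral.integral_mul_const, hc'eq x, hd'eq x]
    ring
  have hNeq' : ∀ x, (fun x => a x * y₀ + b x) x
      = (fun x => a x * y₀ + b x) 0 + ∫ t in (0:ℝ)..x, (a' t * y₀ + b' t) := hNeq
  have hDeq' : ∀ x, (fun x => c x * y₀ + d x) x
      = (fun x => c x * y₀ + d x) 0 + ∫ t in (0:ℝ)..x, (c' t * y₀ + d' t) := hDeq
  have hNC : Continuous fun x => a x * y₀ + b x := cont_of_ftc hN'li hNeq'
  have hDC : Continuous fun x => c x * y₀ + d x := cont_of_ftc hD'li hDeq'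
  obtain ⟨hinv, hinvli⟩ := invRule hD'li hDeq' hden
  refine ⟨⟨fun t => (a' t * y₀ + b' t) * (c t * y₀ + d t)⁻¹
      + (a t * y₀ + b t) * (-(c' t * y₀ + d' t) * (((c t * y₀ + d t)⁻¹) ^ 2)), ?_, ?_⟩, ?_, ?_⟩
  · exact (locInt_mul_cont hN'li (hDC.inv₀ hden)).add
      (locInt_congr (cont_mul_locInt (locInt_mul_cont hD'li.neg ((hDC.inv₀ hden).pow 2)) hNC)
        (fun t => by simp only [Pi.neg_apply, Pi.pow_apply, Pi.inv_apply]; try ring))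
  · intro x
    have key := prodRule (F := fun x => a x * y₀ + b x) (G := fun x => (c x * y₀ + d x)⁻¹)
      hN'li hinvli hNeq' hinv x
    simp only [div_eq_mul_inv]
    convert key using 2
  · simp [ha0, hb0, hc0, hd0]
  · filter_upwards [hM] with x hx
    obtain ⟨hax, hbx, hcx, hdx⟩ := hx
    have hNd : HasDerivAt (fun x => a x * y₀ + b x)
        ((g x / 2 * a x + h x * c x) * y₀ + (g x / 2 * b x + h x * d x)) x :=
      (hax.mul_const y₀).add hbx
    have hDd : HasDerivAt (fun x => c x * y₀ + d x)
        ((-f x * a x - g x / 2 * c x) * y₀ + (-f x * b x - g x / 2 * d x)) x :=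
      (hcx.mul_const y₀).add hdx
    have hyd : HasDerivAt (fun x => (a x * y₀ + b x) / (c x * y₀ + d x)) _ x := hNd.div hDd (hden x)
    convert hyd using 1
    have h1 : c x * y₀ + d x ≠ 0 := hden x
    rw [eq_div_iff (pow_ne_zero 2 h1)]
    have e : (a x * y₀ + b x) / (c x * y₀ + d x) * (c x * y₀ + d x) = a x * y₀ + b x :=
      div_mul_cancel₀ _ h1
    linear_combination (f x * ((a x * y₀ + b x) / (c x * y₀ + d x) * (c x * y₀ + d x)
      + (a x * y₀ + b x)) + g x * (c x * y₀ + d x)) * e
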